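/- arXiv:1809.08130 — 4 statements merged into one kernel-verified Lean document; each statement's English description precedes it below -/
import Mathlib

section
/- Let p > 2, let Ω ⊂ ℝ² be open, and let u : Ω → ℝ be twice continuously differentiable with ∇u(x) ≠ 0 for all x ∈ Ω, with |∇u|^{p−2}·Δu + (p−2)·|∇u|^{p−4}·Δ∞u = 0 at every point of Ω (u is p-harmonic), and with Δu ≤ 0 at every point of Ω (u is superharmonic). If γ : [a,b] → Ω is differentiable with γ'(t) = ∇u(γ(t)) for all t, then the function t ↦ u(γ(t)) is convex on [a,b]. -/
open Set

noncomputable section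

/-- Second partial derivative ∂²u/∂xᵢ∂xⱼ of `u : ℝ² → ℝ`. -/
def secondPartial (u : EuclideanSpace ℝ (Fin 2) → ℝ) (x : EuclideanSpace ℝ (Fin 2))
    (i j : Fin 2) : ℝ :=
  fderiv ℝ (fderiv ℝ u) x (EuclideanSpace.single i 1) (EuclideanSpace.single j 1)

/-- The infinity-Laplacian Δ∞u = Σᵢⱼ (∂u/∂xᵢ)(∂u/∂xⱼ)(∂²u/∂xᵢ∂xⱼ). -/
def inftyLaplacian (u : EuclideanSpace ℝ (Fin 2) → ℝ) (x : EuclideanSpace ℝ (Fin 2)) : ℝ :=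
  ∑ i : Fin 2, ∑ j : Fin 2,
    fderiv ℝ u x (EuclideanSpace.single i 1) * fderiv ℝ u x (EuclideanSpace.single j 1) *
      secondPartial u x i j

/-- The ordinary Laplacian Δu = Σᵢ ∂²u/∂xᵢ². -/
def ordLaplacian (u : EuclideanSpace ℝ (Fin 2) → ℝ) (x : EuclideanSpace ℝ (Fin 2)) : ℝ :=
  ∑ i : Fin 2, secondPartial u x i i

open InnerProductSpace

local notation "E" => EuclideanSpace ℝ (Fin 2)

lemma eucl_decomp (v : EuclideanSpace ℝ (Fin 2)) :
    v = ∑ i : Fin 2, v i • EuclideanSpace.single i 1 := by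
  ext j
  fin_cases j <;> simp [EuclideanSpace.single_apply, Finset.sum_apply]

/-- Along a streamline of a C² `p`-harmonic (and superharmonic) function with
nonvanishing gradient, `t ↦ u(γ(t))` is convex. -/
theorem statement2 (p : ℝ) (hp : 2 < p)
    (Ω : Set (EuclideanSpace ℝ (Fin 2))) (hΩ : IsOpen Ω)
    (u : EuclideanSpace ℝ (Fin 2) → ℝ) (hu : ContDiffOn ℝ 2 u Ω)
    (hgrad : ∀ x ∈ Ω, gradient u x ≠ 0)
    (hpharm : ∀ x ∈ Ω,
      ‖gradient u x‖ ^ (p - 2) * ordLaplacian u x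
        + (p - 2) * ‖gradient u x‖ ^ (p - 4) * inftyLaplacian u x = 0)
    (hsuper : ∀ x ∈ Ω, ordLaplacian u x ≤ 0)
    (a b : ℝ) (γ : ℝ → EuclideanSpace ℝ (Fin 2))
    (hγΩ : ∀ t ∈ Icc a b, γ t ∈ Ω)
    (hγ' : ∀ t ∈ Icc a b, HasDerivAt γ (gradient u (γ t)) t) :
    ConvexOn ℝ (Icc a b) (fun t => u (γ t)) := by
  set g : E → E := gradient u with hg
  -- differentiability facts at points of Ω
  have hudiff : ∀ x ∈ Ω, DifferentiableAt ℝ u x := fun x hx =>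
    (hu.contDiffAt (hΩ.mem_nhds hx)).differentiableAt (by norm_num)
  have hfd1 : ContDiffOn ℝ 1 (fderiv ℝ u) Ω := hu.fderiv_of_isOpen hΩ (by norm_num)
  have hfddiff : ∀ x ∈ Ω, DifferentiableAt ℝ (fderiv ℝ u) x := fun x hx =>
    (hfd1.contDiffAt (hΩ.mem_nhds hx)).differentiableAt one_ne_zero
  -- fderiv and gradient
  have hgradfd : ∀ x, ∀ v : E, fderiv ℝ u x v = inner ℝ (g x) v := by
    intro x v
    rw [hg, gradient]
    exact (toDual_symm_apply (x := v) (y := fderiv ℝ u x)).symm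
  -- gradient is differentiable: g = toDual.symm ∘ fderiv u
  have hGfd : ∀ x ∈ Ω, HasFDerivAt g
      (((toDual ℝ E).symm.toContinuousLinearEquiv :
          (E →L[ℝ] ℝ) ≃L[ℝ] E).toContinuousLinearMap.comp (fderiv ℝ (fderiv ℝ u) x)) x := by
    intro x hx
    exact (((toDual ℝ E).symm.toContinuousLinearEquiv :
        (E →L[ℝ] ℝ) ≃L[ℝ] E).toContinuousLinearMap.hasFDerivAt).comp x
      ((hfddiff x hx).hasFDerivAt)
  -- key identity: ⟪fderiv g x v, w⟫ = fderiv (fderiv u) x v w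
  have hbil : ∀ x ∈ Ω, ∀ v w : E,
      (inner ℝ ((toDual ℝ E).symm (fderiv ℝ (fderiv ℝ u) x v)) w : ℝ)
        = fderiv ℝ (fderiv ℝ u) x v w := fun x _ v w => toDual_symm_apply
  -- nonnegativity of the infinity Laplacian on Ω
  have hinfty : ∀ x ∈ Ω, 0 ≤ inftyLaplacian u x := by
    intro x hx
    have hpos : (0:ℝ) < ‖g x‖ := norm_pos_iff.2 (hgrad x hx)
    have h1 : (0:ℝ) < ‖g x‖ ^ (p - 2) := Real.rpow_pos_of_pos hpos _
    have h2 : (0:ℝ) < ‖g x‖ ^ (p - 4) := Real.rpow_pos_of_pos hpos _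
    have h3 := hpharm x hx
    have h4 := hsuper x hx
    by_contra hneg
    push_neg at hneg
    nlinarith [mul_pos (mul_pos (show (0:ℝ) < p - 2 by linarith) h2) (neg_pos.2 hneg),
      mul_nonpos_of_nonneg_of_nonpos h1.le h4]
  -- the quadratic form of the Hessian at g equals the infinity Laplacian
  have hquad : ∀ x ∈ Ω, fderiv ℝ (fderiv ℝ u) x (g x) (g x) = inftyLaplacian u x := by
    intro x hx
    have hdecomp := eucl_decomp (g x)
    have hcoord : ∀ i : Fin 2, fderiv ℝ u x (EuclideanSpace.single i 1) = g x i := by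
      intro i
      rw [hgradfd x (EuclideanSpace.single i 1)]
      simp [EuclideanSpace.inner_single_right]
    calc fderiv ℝ (fderiv ℝ u) x (g x) (g x)
        = fderiv ℝ (fderiv ℝ u) x (∑ i : Fin 2, g x i • EuclideanSpace.single i 1)
            (∑ j : Fin 2, g x j • EuclideanSpace.single j 1) := by rw [← hdecomp]
      _ = ∑ i : Fin 2, ∑ j : Fin 2, g x i * g x j *
            fderiv ℝ (fderiv ℝ u) x (EuclideanSpace.single i 1) (EuclideanSpace.single j 1) := by
          simp only [map_sum, map_smul, ContinuousLinearMap.coe_sum',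
            ContinuousLinearMap.coe_smul', Finset.sum_apply, Pi.smul_apply, smul_eq_mul]
          rw [Finset.sum_comm]
          refine Finset.sum_congr rfl fun i _ => ?_
          rw [Finset.mul_sum]
          refine Finset.sum_congr rfl fun j _ => ?_
          ring
      _ = inftyLaplacian u x := by
          unfold inftyLaplacian secondPartial
          congr 1; ext i; congr 1; ext j; rw [hcoord i, hcoord j]
  -- now apply the convexity criterion
  apply convexOn_of_hasDerivWithinAt2_nonneg (convex_Icc a b)
    (f' := fun t => (inner ℝ (g (γ t)) (g (γ t)) : ℝ))
    (f'' := fun t => 2 * inftyLaplacian u (γ t))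
  · -- continuity
    have hγcont : ContinuousOn γ (Icc a b) := fun t ht =>
      ((hγ' t ht).continuousAt).continuousWithinAt
    exact (hu.continuousOn.comp hγcont hγΩ)
  · -- first derivative
    intro t ht
    have ht' : t ∈ Icc a b := interior_subset ht
    have hx := hγΩ t ht'
    have h1 : HasDerivAt (fun s => u (γ s)) (fderiv ℝ u (γ t) (g (γ t))) t :=
      (hudiff _ hx).hasFDerivAt.comp_hasDerivAt t (hγ' t ht')
    have : fderiv ℝ u (γ t) (g (γ t)) = inner ℝ (g (γ t)) (g (γ t)) := hgradfd _ _
    exact (this ▸ h1).hasDerivWithinAt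
  · -- second derivative
    intro t ht
    have ht' : t ∈ Icc a b := interior_subset ht
    have hx := hγΩ t ht'
    -- derivative of s ↦ g (γ s)
    set w' : E := (toDual ℝ E).symm (fderiv ℝ (fderiv ℝ u) (γ t) (g (γ t))) with hw'
    have hGd : HasDerivAt (fun s => g (γ s)) w' t := by
      have := (hGfd (γ t) hx).comp_hasDerivAt t (hγ' t ht')
      exact this
    have hinn := hGd.inner ℝ hGd
    have e2 : (inner ℝ w' (g (γ t)) : ℝ) = inftyLaplacian u (γ t) := by
      rw [hw', hbil (γ t) hx, hquad (γ t) hx]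
    have e1 : (inner ℝ (g (γ t)) w' : ℝ) = inftyLaplacian u (γ t) := by
      rw [real_inner_comm]; exact e2
    have hval : (inner ℝ (g (γ t)) w' : ℝ) + inner ℝ w' (g (γ t))
        = 2 * inftyLaplacian u (γ t) := by rw [e1, e2]; ring
    exact (hval ▸ hinn).hasDerivWithinAt
  · intro t ht
    have hx := hγΩ t (interior_subset ht)
    linarith [hinfty (γ t) hx]
end
end

section
/- Let u : ℝⁿ → ℝ be continuous and bounded below, let ε > 0, and let x ∈ ℝⁿ be a point at which u_ε is differentiable. If y ∈ ℝⁿ attains the infimum defining u_ε(x), i.e. u_ε(x) = u(y) + |x−y|²/(2ε), then ∇u_ε(x) = (x − y)/ε. In particular, the point attaining the infimum is unique: y = x − ε∇u_ε(x). -/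
open Set

noncomputable section

/-- The infimal convolution `u_ε(x) = inf_y ( u(y) + |x−y|²/(2ε) )`. -/
def infConv {n : ℕ} (u : EuclideanSpace ℝ (Fin n) → ℝ) (ε : ℝ)
    (x : EuclideanSpace ℝ (Fin n)) : ℝ :=
  ⨅ y : EuclideanSpace ℝ (Fin n), (u y + ‖x - y‖ ^ 2 / (2 * ε))

/-- If `u_ε` is differentiable at `x` and the infimum defining `u_ε(x)` is attained
at `y`, then `∇u_ε(x) = (x − y)/ε`; in particular `y = x − ε∇u_ε(x)` is unique. -/
theorem statement7 {n : ℕ} (u : EuclideanSpace ℝ (Fin n) → ℝ)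
    (hcont : Continuous u) (hbdd : BddBelow (Set.range u))
    (ε : ℝ) (hε : 0 < ε) (x : EuclideanSpace ℝ (Fin n))
    (hdiff : DifferentiableAt ℝ (infConv u ε) x)
    (y : EuclideanSpace ℝ (Fin n))
    (hy : infConv u ε x = u y + ‖x - y‖ ^ 2 / (2 * ε)) :
    gradient (infConv u ε) x = ε⁻¹ • (x - y) ∧ y = x - ε • gradient (infConv u ε) x := by
  obtain ⟨c, hc⟩ := hbdd
  have h2ε : (0:ℝ) < 2 * ε := by linarith
  -- the comparison function
  set g : EuclideanSpace ℝ (Fin n) → ℝ := fun z => u y + ‖z - y‖ ^ 2 / (2 * ε) with hg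
  -- infConv ≤ g everywhere
  have hle : ∀ z, infConv u ε z ≤ g z := by
    intro z
    have hb : BddBelow (Set.range fun y' : EuclideanSpace ℝ (Fin n) =>
        u y' + ‖z - y'‖ ^ 2 / (2 * ε)) := by
      refine ⟨c, ?_⟩
      rintro _ ⟨y', rfl⟩
      have h1 : c ≤ u y' := hc ⟨y', rfl⟩
      have h2 : (0:ℝ) ≤ ‖z - y'‖ ^ 2 / (2 * ε) :=
        div_nonneg (by positivity) (le_of_lt h2ε)
      linarith
    exact ciInf_le hb y
  -- the difference has a global (hence local) minimum at x
  have hmin : IsLocalMin (fun z => g z - infConv u ε z) x := by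
    apply Filter.Eventually.of_forall
    intro z
    have h1 := hle z
    have h2 : g x - infConv u ε x = 0 := by simp [hg, hy]
    simp only [h2]
    linarith
  -- derivative of g at x
  have hgd : HasFDerivAt g
      ((2 * ε)⁻¹ • (2 • (innerSL ℝ (x - y)))) x := by
    have h1 : HasFDerivAt (fun z : EuclideanSpace ℝ (Fin n) => z - y)
        (ContinuousLinearMap.id ℝ _) x := (hasFDerivAt_id x).sub_const y
    have h2 := h1.norm_sq
    have h3 := h2.const_smul (2 * ε)⁻¹
    have h4 := h3.const_add (u y)
    rw [ContinuousLinearMap.comp_id] at h4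
    convert h4 using 2 with z
    case e'_11 => simp [hg, div_eq_inv_mul, smul_eq_mul]
    all_goals rfl
  -- gradient of infConv at x
  have hugrad : HasGradientAt (infConv u ε) (gradient (infConv u ε) x) x :=
    hdiff.hasGradientAt
  have hufd : HasFDerivAt (infConv u ε)
      ((InnerProductSpace.toDual ℝ _) (gradient (infConv u ε) x)) x :=
    hugrad.hasFDerivAt
  -- derivative of the difference is zero
  have hzero := hmin.hasFDerivAt_eq_zero (hgd.sub hufd)
  have hfd_eq : ((2 * ε)⁻¹ • (2 • (innerSL ℝ (x - y)))) =
      (InnerProductSpace.toDual ℝ _) (gradient (infConv u ε) x) := by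
    rwa [sub_eq_zero] at hzero
  have hkey : gradient (infConv u ε) x = ε⁻¹ • (x - y) := by
    apply (InnerProductSpace.toDual ℝ _).injective
    rw [← hfd_eq]
    ext v
    simp only [InnerProductSpace.toDual_apply_apply, ContinuousLinearMap.smul_apply,
      ContinuousLinearMap.smul_apply, innerSL_apply_apply]
    rw [real_inner_smul_left]
    ring_nf
  refine ⟨hkey, ?_⟩
  rw [hkey, smul_smul, mul_inv_cancel₀ (ne_of_gt hε), one_smul]
  abel
end
end

section
/- Let u : ℝⁿ → ℝ be continuous and bounded below, let ε > 0, and let x ∈ ℝⁿ be a point at which u_ε is differentiable. Suppose y ∈ ℝⁿ attains the infimum defining u_ε(x), i.e. u_ε(x) = u(y) + |x−y|²/(2ε), and suppose u is differentiable at y. Then ∇u_ε(x) = ∇u(y). -/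
open Set

noncomputable section

/-- If `u_ε` is differentiable at `x`, the infimum defining `u_ε(x)` is attained at `y`,
and `u` is differentiable at `y`, then `∇u_ε(x) = ∇u(y)`. -/
theorem statement8 {n : ℕ} (u : EuclideanSpace ℝ (Fin n) → ℝ)
    (hcont : Continuous u) (hbdd : BddBelow (Set.range u))
    (ε : ℝ) (hε : 0 < ε) (x : EuclideanSpace ℝ (Fin n))
    (hdiff : DifferentiableAt ℝ (infConv u ε) x)
    (y : EuclideanSpace ℝ (Fin n))
    (hy : infConv u ε x = u y + ‖x - y‖ ^ 2 / (2 * ε))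
    (hu : DifferentiableAt ℝ u y) :
    gradient (infConv u ε) x = gradient u y := by
  obtain ⟨c, hc⟩ := hbdd
  -- key inequality: u_ε(x+h) ≤ u(y+h) + ‖x-y‖²/(2ε)
  have key : ∀ h : EuclideanSpace ℝ (Fin n),
      infConv u ε (x + h) ≤ u (y + h) + ‖x - y‖ ^ 2 / (2 * ε) := by
    intro h
    have hb : BddBelow (Set.range fun z => u z + ‖x + h - z‖ ^ 2 / (2 * ε)) := by
      refine ⟨c, ?_⟩
      rintro _ ⟨z, rfl⟩
      have h1 : c ≤ u z := hc ⟨z, rfl⟩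
      have h2 : 0 ≤ ‖x + h - z‖ ^ 2 / (2 * ε) :=
        div_nonneg (by positivity) (by positivity)
      linarith
    have := ciInf_le hb (y + h)
    simpa [infConv, show x + h - (y + h) = x - y by abel] using this
  -- the function h ↦ u_ε(x+h) - u(y+h) has a (global, hence local) max at 0
  set f : EuclideanSpace ℝ (Fin n) → ℝ :=
    fun h => infConv u ε (x + h) - u (y + h) with hf
  have hmax : IsLocalMax f 0 := by
    apply Filter.Eventually.of_forall
    intro h
    have := key h
    simp only [hf, add_zero]
    rw [hy]
    linarith
  have hA : HasFDerivAt (fun h : EuclideanSpace ℝ (Fin n) => infConv u ε (x + h))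
      (fderiv ℝ (infConv u ε) x) 0 := by
    have h' : HasFDerivAt (infConv u ε) (fderiv ℝ (infConv u ε) x) (x + id (0 : EuclideanSpace ℝ (Fin n))) := by
      simpa using hdiff.hasFDerivAt
    have := h'.comp 0 ((hasFDerivAt_id (0 : EuclideanSpace ℝ (Fin n))).const_add x)
    simpa [Function.comp_def] using this
  have hB : HasFDerivAt (fun h : EuclideanSpace ℝ (Fin n) => u (y + h))
      (fderiv ℝ u y) 0 := by
    have h' : HasFDerivAt u (fderiv ℝ u y) (y + id (0 : EuclideanSpace ℝ (Fin n))) := by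
      simpa using hu.hasFDerivAt
    have := h'.comp 0 ((hasFDerivAt_id (0 : EuclideanSpace ℝ (Fin n))).const_add y)
    simpa [Function.comp_def] using this
  have hF : HasFDerivAt f (fderiv ℝ (infConv u ε) x - fderiv ℝ u y) 0 := hA.sub hB
  have hzero : fderiv ℝ (infConv u ε) x - fderiv ℝ u y = 0 :=
    hmax.hasFDerivAt_eq_zero hF
  have heq : fderiv ℝ (infConv u ε) x = fderiv ℝ u y := by
    have := sub_eq_zero.mp hzero
    exact this
  simp only [gradient, heq]
end
end

section
/- Let u : ℝⁿ → ℝ be differentiable with ∇u continuous, and semiconvex, i.e. there is a constant C > 0 such that x ↦ u(x) + C|x|² is convex. If γ₁, γ₂ : [0,T] → ℝⁿ are differentiable curves satisfying the descending gradient flow equation γᵢ'(t) = −∇u(γᵢ(t)) for all t ∈ [0,T] (i = 1,2) and γ₁(0) = γ₂(0), then γ₁(t) = γ₂(t) for all t ∈ [0,T]. -/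
open Set
open scoped RealInnerProductSpace

noncomputable section

/-- chain rule for a curve composed with u -/
lemma chain_aux {n : ℕ} {u : EuclideanSpace ℝ (Fin n) → ℝ}
    (hdiff : Differentiable ℝ u) {p : ℝ → EuclideanSpace ℝ (Fin n)}
    {v : EuclideanSpace ℝ (Fin n)} {t : ℝ} (hp : HasDerivAt p v t) :
    HasDerivAt (fun s => u (p s)) ⟪gradient u (p t), v⟫ t := by
  have h1 : HasFDerivAt u ((InnerProductSpace.toDual ℝ _) (gradient u (p t))) (p t) :=
    (hdiff (p t)).hasGradientAt
  have := h1.comp_hasDerivAt t hp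
  simp only [InnerProductSpace.toDual_apply_apply] at this
  exact this

/-- monotonicity (up to 2C) of the gradient of a semiconvex function -/
lemma mono_aux {n : ℕ} {u : EuclideanSpace ℝ (Fin n) → ℝ}
    (hdiff : Differentiable ℝ u) {C : ℝ}
    (hconv : ConvexOn ℝ Set.univ (fun x => u x + C * ‖x‖ ^ 2))
    (x y : EuclideanSpace ℝ (Fin n)) :
    -(2 * C) * ‖y - x‖ ^ 2 ≤ ⟪gradient u y - gradient u x, y - x⟫ := by
  set v := y - x with hv
  set p : ℝ → EuclideanSpace ℝ (Fin n) := fun t => t • v + x with hp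
  have hpd : ∀ t : ℝ, HasDerivAt p v t := fun t => by
    simpa [hp] using ((hasDerivAt_id t).smul_const v).add_const x
  set φ : ℝ → ℝ := fun t => u (p t) + C * ‖p t‖ ^ 2 with hφ
  have hφconv : ConvexOn ℝ Set.univ φ := by
    have := hconv.comp_affineMap (AffineMap.lineMap x y : ℝ →ᵃ[ℝ] EuclideanSpace ℝ (Fin n))
    simp only [Function.comp_def, AffineMap.lineMap_apply_module', preimage_univ] at this
    exact this
  have hφd : ∀ t : ℝ, HasDerivAt φ (⟪gradient u (p t), v⟫ + C * (2 * ⟪p t, v⟫)) t := by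
    intro t
    have h2 : HasDerivAt (fun s => ⟪p s, p s⟫) (⟪p t, v⟫ + ⟪v, p t⟫) t :=
      HasDerivAt.inner ℝ (hpd t) (hpd t)
    have h2' : HasDerivAt (fun s => C * ‖p s‖ ^ 2) (C * (2 * ⟪p t, v⟫)) t := by
      have h3 : HasDerivAt (fun s => ‖p s‖ ^ 2) (2 * ⟪p t, v⟫) t := by
        have : (fun s => ‖p s‖ ^ 2) = fun s => ⟪p s, p s⟫ := by
          funext s; rw [real_inner_self_eq_norm_sq]
        rw [this]
        refine h2.congr_deriv ?_
        rw [real_inner_comm (p t) v]; ring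
      simpa using h3.const_mul C
    exact (chain_aux hdiff (hpd t)).add h2'
  have h01 : (0:ℝ) < 1 := one_pos
  have hle := (hφconv.le_slope_of_hasDerivAt (mem_univ 0) (mem_univ 1) h01 (hφd 0)).trans
    (hφconv.slope_le_of_hasDerivAt (mem_univ 0) (mem_univ 1) h01 (hφd 1))
  have hp0 : p 0 = x := by simp [p]
  have hp1 : p 1 = y := by simp [p, v]
  rw [hp0, hp1] at hle
  have hvv : ⟪v, v⟫ = ‖v‖ ^ 2 := real_inner_self_eq_norm_sq v
  have hiv : ⟪y, v⟫ - ⟪x, v⟫ = ‖v‖ ^ 2 := by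
    rw [← inner_sub_left, ← hv, hvv]
  have : ⟪gradient u y - gradient u x, v⟫ = ⟪gradient u y, v⟫ - ⟪gradient u x, v⟫ :=
    inner_sub_left _ _ _
  rw [this]
  have key : -(2 * C) * ‖v‖ ^ 2 = C * (2 * ⟪x, v⟫) - C * (2 * ⟪y, v⟫) := by
    rw [← hiv]; ring
  rw [key]; linarith

/-- For a differentiable semiconvex function with continuous gradient, solutions of
the descending gradient flow are unique. -/
theorem statement15 {n : ℕ} (u : EuclideanSpace ℝ (Fin n) → ℝ)
    (hdiff : Differentiable ℝ u) (hgradc : Continuous (gradient u))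
    (C : ℝ) (hC : 0 < C)
    (hconv : ConvexOn ℝ Set.univ (fun x => u x + C * ‖x‖ ^ 2))
    (T : ℝ) (hT : 0 ≤ T) (γ₁ γ₂ : ℝ → EuclideanSpace ℝ (Fin n))
    (hγ₁ : ∀ t ∈ Icc (0 : ℝ) T, HasDerivAt γ₁ (-gradient u (γ₁ t)) t)
    (hγ₂ : ∀ t ∈ Icc (0 : ℝ) T, HasDerivAt γ₂ (-gradient u (γ₂ t)) t)
    (hinit : γ₁ 0 = γ₂ 0) :
    ∀ t ∈ Icc (0 : ℝ) T, γ₁ t = γ₂ t := by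
  set d : ℝ → EuclideanSpace ℝ (Fin n) := fun t => γ₁ t - γ₂ t with hd
  set f : ℝ → ℝ := fun t => ‖d t‖ ^ 2 with hfdef
  set f' : ℝ → ℝ := fun t =>
    2 * ⟪d t, gradient u (γ₂ t) - gradient u (γ₁ t)⟫ with hf'def
  have hdd : ∀ t ∈ Icc (0 : ℝ) T,
      HasDerivAt d (gradient u (γ₂ t) - gradient u (γ₁ t)) t := by
    intro t ht
    have := (hγ₁ t ht).sub (hγ₂ t ht)
    refine this.congr_deriv ?_
    abel
  have hfd : ∀ t ∈ Icc (0 : ℝ) T, HasDerivAt f (f' t) t := by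
    intro t ht
    have h2 := HasDerivAt.inner ℝ (hdd t ht) (hdd t ht)
    have : f = fun s => ⟪d s, d s⟫ := by
      funext s; rw [real_inner_self_eq_norm_sq]
    rw [this]
    refine h2.congr_deriv ?_
    rw [hf'def, real_inner_comm (d t)]
    ring
  have hbound : ∀ t ∈ Icc (0 : ℝ) T, f' t ≤ (4 * C) * f t := by
    intro t ht
    have hm : -(2 * C) * ‖d t‖ ^ 2 ≤
        ⟪gradient u (γ₁ t) - gradient u (γ₂ t), d t⟫ :=
      mono_aux hdiff hconv (γ₂ t) (γ₁ t)
    have heq : ⟪d t, gradient u (γ₂ t) - gradient u (γ₁ t)⟫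
        = -⟪gradient u (γ₁ t) - gradient u (γ₂ t), d t⟫ := by
      rw [real_inner_comm, ← inner_neg_left, neg_sub]
    show 2 * ⟪d t, gradient u (γ₂ t) - gradient u (γ₁ t)⟫ ≤ 4 * C * ‖d t‖ ^ 2
    rw [heq]
    linarith [hm]
  have hgron := le_gronwallBound_of_liminf_deriv_right_le (f := f) (f' := f')
    (δ := 0) (K := 4 * C) (ε := 0) (a := 0) (b := T)
    (fun t ht => (hfd t ht).continuousAt.continuousWithinAt)
    (fun x hx r hr => by
      have h := ((hfd x (Ico_subset_Icc_self hx)).hasDerivWithinAt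
        (s := Ioi x))
      rw [hasDerivWithinAt_iff_tendsto_slope] at h
      have hIoi : Ioi x \ {x} = Ioi x := diff_singleton_eq_self (by simp)
      rw [hIoi] at h
      have hev : ∀ᶠ z in nhdsWithin x (Ioi x), (z - x)⁻¹ * (f z - f x) < r := by
        filter_upwards [h.eventually_lt_const hr] with z hz
        have hs : slope f x z = (z - x)⁻¹ * (f z - f x) := by
          rw [slope_def_field]; ring
        rwa [hs] at hz
      exact hev.frequently)
    (by simp [hfdef, hd, hinit])
    (fun x hx => by
      have := hbound x (Ico_subset_Icc_self hx); linarith)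
  intro t ht
  have h0 := hgron t ht
  rw [sub_zero, gronwallBound_ε0_δ0] at h0
  have h1 : f t ≤ 0 := h0
  have h2 : (0:ℝ) ≤ f t := sq_nonneg _
  have h3 : ‖d t‖ ^ 2 = 0 := le_antisymm h1 h2
  have h4 : d t = 0 := by
    rwa [pow_eq_zero_iff (by norm_num), norm_eq_zero] at h3
  exact sub_eq_zero.mp h4
end
end
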